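/- Let a₁,…,a_n be distinct reals (n ≥ 1), ε₁,…,ε_n ∈ {-1,1}, Δᵢ(a) = εᵢ(a-aᵢ), and let I ⊆ ℝ be an open interval on which Δᵢ > 0 for all i. Let F̂(a) = ∏_{i=1}^n (a-aᵢ). Then for all real ξ₁,…,ξ_n, the function x(a) = ∑_{i=1}^n ξᵢ Δᵢ(a)^{-1/2} satisfies the linear ODE Op_n[F̂]x = 0 on I. -/

import Mathlib

open Polynomial

/-- The Pochhammer symbol `(1/2)_s`. -/
noncomputable def poch (s : ℕ) : ℝ := (ascPochhammer ℝ s).eval (1/2 : ℝ)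

/-- The operator `Op_n[F]` acting on `h`:
`(Op_n[F]h)(a) = ∑_{s=0}^{n} F^{(n-s)}(a)/(n-s)! · h^{(s)}(a)/(1/2)_s`. -/
noncomputable def Op (n : ℕ) (F h : ℝ → ℝ) (a : ℝ) : ℝ :=
  ∑ s ∈ Finset.range (n + 1),
    iteratedDeriv (n - s) F a / (Nat.factorial (n - s) : ℝ) *
      (iteratedDeriv s h a / poch s)

lemma poch_succ (s : ℕ) : poch (s + 1) = poch s * (1/2 + s) := by
  simp [poch, ascPochhammer_succ_right]

lemma poch_pos (s : ℕ) : 0 < poch s := by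
  induction s with
  | zero => simp [poch]
  | succ s ih => rw [poch_succ]; positivity

/-- Iterated derivatives of the sum of shifted power functions. -/
lemma iter_deriv_x (n : ℕ) (a ε ξ : Fin n → ℝ)
    (I : Set ℝ) (hIopen : IsOpen I) (hΔ : ∀ i, ∀ t ∈ I, 0 < ε i * (t - a i)) (s : ℕ) :
    ∀ t ∈ I, iteratedDeriv s (fun u => ∑ i, ξ i * (ε i * (u - a i)) ^ (-(1/2) : ℝ)) t
      = ∑ i, ξ i * ((-1 : ℝ)^s * poch s * (ε i)^s *
          (ε i * (t - a i)) ^ ((-(1/2) : ℝ) - (s : ℝ))) := by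
  induction s with
  | zero =>
    intro t ht
    simp [poch, iteratedDeriv_zero]
  | succ s ih =>
    intro t ht
    rw [iteratedDeriv_succ]
    have hev : iteratedDeriv s (fun u => ∑ i, ξ i * (ε i * (u - a i)) ^ (-(1/2) : ℝ))
        =ᶠ[nhds t] fun u => ∑ i, ξ i * ((-1 : ℝ)^s * poch s * (ε i)^s *
          (ε i * (u - a i)) ^ ((-(1/2) : ℝ) - (s : ℝ))) :=
      Filter.eventuallyEq_of_mem (hIopen.mem_nhds ht) ih
    rw [hev.deriv_eq]
    have hd : ∀ i ∈ Finset.univ (α := Fin n),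
        HasDerivAt (fun u => ξ i * ((-1 : ℝ)^s * poch s * (ε i)^s *
            (ε i * (u - a i)) ^ ((-(1/2) : ℝ) - (s : ℝ))))
          (ξ i * ((-1 : ℝ)^(s+1) * poch (s+1) * (ε i)^(s+1) *
            (ε i * (t - a i)) ^ ((-(1/2) : ℝ) - ((s : ℝ) + 1)))) t := by
      intro i _
      have h1 : HasDerivAt (fun u : ℝ => ε i * (u - a i)) (ε i) t := by
        simpa using ((hasDerivAt_id t).sub_const (a i)).const_mul (ε i)
      have h2 := h1.rpow_const (p := (-(1/2) : ℝ) - (s : ℝ)) (Or.inl (ne_of_gt (hΔ i t ht)))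
      have h3 := h2.const_mul (ξ i * ((-1 : ℝ)^s * poch s * (ε i)^s))
      refine (h3.congr_deriv ?_).congr_of_eventuallyEq (Filter.Eventually.of_forall fun u => ?_)
      · rw [poch_succ, pow_succ, pow_succ]
        have hexp : (-(1/2) : ℝ) - (s : ℝ) - 1 = (-(1/2) : ℝ) - ((s : ℝ) + 1) := by ring
        rw [hexp]; ring
      · show _ = _; ring
    have := (HasDerivAt.fun_sum hd).deriv
    rw [this]
    refine Finset.sum_congr rfl fun i _ => ?_
    push_cast
    ring
/-- Iterated derivatives of the product function are evaluations of polynomial derivatives. -/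
lemma iter_deriv_poly (n : ℕ) (a : Fin n → ℝ) (m : ℕ) :
    iteratedDeriv m (fun u => ∏ i, (u - a i)) =
      fun t => (derivative^[m] (∏ i, (X - C (a i)))).eval t := by
  induction m with
  | zero =>
    funext t
    simp [iteratedDeriv_zero, eval_prod]
  | succ m ih =>
    funext t
    rw [iteratedDeriv_succ, ih, Function.iterate_succ_apply']
    exact Polynomial.deriv _

/-- Taylor expansion identity for polynomials. -/
lemma taylor_sum {p : ℝ[X]} {N : ℕ} (h : p.natDegree < N) (t c : ℝ) :
    ∑ m ∈ Finset.range N, (derivative^[m] p).eval t / (m.factorial : ℝ) * (c - t)^m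
      = p.eval c := by
  have h1 : p.eval c = (Polynomial.taylor t p).eval (c - t) :=
    (Polynomial.taylor_eval_sub t p c).symm
  have h2 : (Polynomial.taylor t p).natDegree < N := by
    rwa [Polynomial.natDegree_taylor]
  rw [h1, Polynomial.eval_eq_sum_range' h2]
  refine Finset.sum_congr rfl fun m _ => ?_
  congr 1
  rw [Polynomial.taylor_coeff]
  have h3 : (derivative^[m] p) = m.factorial • Polynomial.hasseDeriv m p := by
    rw [← Polynomial.factorial_smul_hasseDeriv]; rfl
  rw [h3]
  simp [Polynomial.eval_smul, Nat.factorial_ne_zero, mul_comm]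

theorem stmt3 (n : ℕ) (hn : 1 ≤ n) (a : Fin n → ℝ) (ha : Function.Injective a)
    (ε : Fin n → ℝ) (hε : ∀ i, ε i = 1 ∨ ε i = -1)
    (I : Set ℝ) (hIopen : IsOpen I) (hIconn : I.OrdConnected)
    (hΔ : ∀ i, ∀ t ∈ I, 0 < ε i * (t - a i))
    (ξ : Fin n → ℝ) :
    ∀ t ∈ I,
      Op n (fun u => ∏ i, (u - a i))
        (fun u => ∑ i, ξ i * (ε i * (u - a i)) ^ (-(1/2) : ℝ)) t = 0 := by
  intro t ht
  set P : ℝ[X] := ∏ i, (X - C (a i)) with hP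
  have hdeg : P.natDegree < n + 1 := by
    have := Polynomial.natDegree_prod_le (Finset.univ : Finset (Fin n))
      (fun i => (X : ℝ[X]) - C (a i))
    simp only [Polynomial.natDegree_X_sub_C] at this
    simpa using Nat.lt_succ_of_le (by simpa [hP] using this)
  unfold Op
  calc
    ∑ s ∈ Finset.range (n + 1),
        iteratedDeriv (n - s) (fun u => ∏ i, (u - a i)) t / ((n - s).factorial : ℝ) *
          (iteratedDeriv s (fun u => ∑ i, ξ i * (ε i * (u - a i)) ^ (-(1/2) : ℝ)) t / poch s)
      = ∑ s ∈ Finset.range (n + 1), ∑ i,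
          (derivative^[n - s] P).eval t / ((n - s).factorial : ℝ) *
            (ξ i * ((-1 : ℝ)^s * poch s * (ε i)^s *
              (ε i * (t - a i)) ^ ((-(1/2) : ℝ) - (s : ℝ))) / poch s) := by
        refine Finset.sum_congr rfl fun s _ => ?_
        rw [iter_deriv_poly, iter_deriv_x n a ε ξ I hIopen hΔ s t ht,
          Finset.sum_div, Finset.mul_sum]
    _ = ∑ i, ∑ s ∈ Finset.range (n + 1),
          (derivative^[n - s] P).eval t / ((n - s).factorial : ℝ) *
            (ξ i * ((-1 : ℝ)^s * poch s * (ε i)^s *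
              (ε i * (t - a i)) ^ ((-(1/2) : ℝ) - (s : ℝ))) / poch s) :=
        Finset.sum_comm
    _ = 0 := by
        refine Finset.sum_eq_zero fun i _ => ?_
        have hpos := hΔ i t ht
        have hew : ε i * (t - a i) ≠ 0 := ne_of_gt hpos
        have he : ε i ≠ 0 := by rcases hε i with h | h <;> rw [h] <;> norm_num
        have hw : t - a i ≠ 0 := by
          intro h0; rw [h0, mul_zero] at hpos; exact lt_irrefl 0 hpos
        have hzero : P.eval (a i) = 0 := by
          rw [hP, Polynomial.eval_prod]
          exact Finset.prod_eq_zero (Finset.mem_univ i) (by simp)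
        have key : ∀ s ∈ Finset.range (n + 1),
            (derivative^[n - s] P).eval t / ((n - s).factorial : ℝ) *
              (ξ i * ((-1 : ℝ)^s * poch s * (ε i)^s *
                (ε i * (t - a i)) ^ ((-(1/2) : ℝ) - (s : ℝ))) / poch s)
            = (ξ i * (ε i * (t - a i)) ^ (-(1/2) : ℝ) * (-1 : ℝ)^n / (t - a i)^n) *
              ((derivative^[n - s] P).eval t / ((n - s).factorial : ℝ) *
                (a i - t)^(n - s)) := by
          intro s hs
          have hsle : s ≤ n := Nat.lt_succ_iff.mp (Finset.mem_range.mp hs)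
          have hsplit : (ε i * (t - a i)) ^ ((-(1/2) : ℝ) - (s : ℝ))
              = (ε i * (t - a i)) ^ (-(1/2) : ℝ) / (ε i * (t - a i))^s := by
            rw [Real.rpow_sub hpos, Real.rpow_natCast]
          rw [hsplit]
          have hat : (a i - t) ^ (n - s) = (-1 : ℝ)^(n-s) * (t - a i)^(n - s) := by
            rw [← neg_pow]; ring_nf
          have hsign : (-1 : ℝ)^n * (-1 : ℝ)^(n - s) = (-1 : ℝ)^s := by
            have h4 : (-1 : ℝ)^n = (-1 : ℝ)^s * (-1 : ℝ)^(n - s) := by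
              rw [← pow_add, Nat.add_sub_cancel' hsle]
            have hsq : ((-1 : ℝ)^(n - s)) * ((-1 : ℝ)^(n - s)) = 1 := by
              rw [← pow_add]
              exact Even.neg_one_pow ⟨n - s, rfl⟩
            calc (-1 : ℝ)^n * (-1 : ℝ)^(n - s)
                = (-1 : ℝ)^s * (((-1 : ℝ)^(n - s)) * ((-1 : ℝ)^(n - s))) := by
                  rw [h4]; ring
              _ = (-1 : ℝ)^s := by rw [hsq, mul_one]
          have hwns : (t - a i)^(n - s) = (t - a i)^n / (t - a i)^s := by
            rw [eq_div_iff (pow_ne_zero s hw), ← pow_add, Nat.sub_add_cancel hsle]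
          rw [hat, hwns]
          have hp : poch s ≠ 0 := ne_of_gt (poch_pos s)
          have hewpow : (ε i * (t - a i))^s = (ε i)^s * (t - a i)^s := mul_pow _ _ _
          rw [hewpow, ← hsign]
          field_simp
        rw [Finset.sum_congr rfl key, ← Finset.mul_sum]
        have hreflect : ∑ s ∈ Finset.range (n + 1),
            (derivative^[n - s] P).eval t / ((n - s).factorial : ℝ) * (a i - t)^(n - s)
            = ∑ m ∈ Finset.range (n + 1),
            (derivative^[m] P).eval t / (m.factorial : ℝ) * (a i - t)^m := by
          have := Finset.sum_range_reflect
            (fun m => (derivative^[m] P).eval t / (m.factorial : ℝ) * (a i - t)^m) (n + 1)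
          simpa using this
        rw [hreflect, taylor_sum hdeg t (a i), hzero, mul_zero]
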